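/- Assume τ_sβ_s > 0, τ_mβ_m > 0 and T_m > T_s > 0. For η ∈ (0,1) set ε_s = ε_m = η and define the resistance proportion at the stationary state E*_{s-m} by P_R(η) = 2K_{s→m} / ( R_s − R_m + [(R_s − R_m)² + 4K_{m→s}K_{s→m}]^{1/2} + 2K_{s→m} ), where R_s, R_m, K_{s→m}, K_{m→s} are evaluated at ε_s = ε_m = η. Then lim_{η→0⁺} (1 − P_R(η))/η = [d_m(T_m − T_s)/(4B₀τ_sβ_s)]·( ((T_s + T_m)/(T_s − T_m))² − 1 ). -/

import Mathlib

open Filter Set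

/-- Resistance proportion at the stationary state `E*_{s-m}` when both mutation
ratios are set equal to `η`. -/
noncomputable def PRsm (B0 ds dm bs bm ts tm Ts Tm : ℝ) (η : ℝ) : ℝ :=
  2 * (B0 * η * ts * bs / dm) /
    (Ts * (1 - η) - Tm * (1 - η)
      + Real.sqrt ((Ts * (1 - η) - Tm * (1 - η)) ^ 2
          + 4 * (B0 * η * tm * bm / ds) * (B0 * η * ts * bs / dm))
      + 2 * (B0 * η * ts * bs / dm))

set_option maxHeartbeats 1000000 in
/-- When `T_m > T_s > 0` (mutation providing a fitness benefit),
`(1 − P_R(E*_{s-m}))/η → (d_m(T_m − T_s)/(4B₀τ_sβ_s))·(((T_s+T_m)/(T_s−T_m))² − 1)`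
as `η → 0⁺`. -/
theorem resistance_proportion_fitness_benefit
    (Lam d ds dm bs bm ts tm : ℝ)
    (hLam : 0 < Lam) (hd : 0 < d) (hds : 0 < ds) (hdm : 0 < dm)
    (hs : 0 < ts * bs) (hm : 0 < tm * bm)
    (B0 Ts Tm : ℝ) (hB0 : B0 = Lam / d)
    (hTs : Ts = B0 * ts * bs / ds) (hTm : Tm = B0 * tm * bm / dm)
    (hTs0 : 0 < Ts) (hTsm : Ts < Tm) :
    Filter.Tendsto (fun η : ℝ => (1 - PRsm B0 ds dm bs bm ts tm Ts Tm η) / η)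
      (nhdsWithin 0 (Set.Ioi 0))
      (nhds (dm * (Tm - Ts) / (4 * B0 * ts * bs) * (((Ts + Tm) / (Ts - Tm)) ^ 2 - 1))) := by
  have hB0pos : 0 < B0 := by rw [hB0]; positivity
  set a : ℝ := Ts - Tm with ha
  have ha0 : a < 0 := by simp only [ha]; linarith
  set cs : ℝ := B0 * ts * bs / dm with hcs
  set cm : ℝ := B0 * tm * bm / ds with hcm
  have hcs0 : 0 < cs := by rw [hcs]; rw [mul_assoc]; positivity
  have hcm0 : 0 < cm := by rw [hcm]; rw [mul_assoc]; positivity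
  set g : ℝ → ℝ := fun η =>
    4 * cm * cs /
      (4 * η * cm * cs +
        2 * cs * (Real.sqrt (a ^ 2 * (1 - η) ^ 2 + 4 * η ^ 2 * cm * cs) - a * (1 - η)))
    with hg
  have key : ∀ η ∈ Ioo (0:ℝ) 1,
      (1 - PRsm B0 ds dm bs bm ts tm Ts Tm η) / η = g η := by
    intro η hη
    obtain ⟨hη0, hη1⟩ := hη
    have h1η : 0 < 1 - η := by linarith
    set S : ℝ := Real.sqrt (a ^ 2 * (1 - η) ^ 2 + 4 * η ^ 2 * cm * cs) with hSdef
    have hSnn : 0 ≤ S := Real.sqrt_nonneg _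
    have hS2 : S ^ 2 = a ^ 2 * (1 - η) ^ 2 + 4 * η ^ 2 * cm * cs := by
      rw [hSdef, Real.sq_sqrt]; positivity
    have hP : 0 < S - a * (1 - η) := by nlinarith
    have hprod : (S + a * (1 - η)) * (S - a * (1 - η)) = 4 * η ^ 2 * cm * cs := by
      linear_combination hS2
    have hSum : 0 < S + a * (1 - η) := by
      have h4 : (0:ℝ) < 4 * η ^ 2 * cm * cs := by positivity
      nlinarith [hprod, hP]
    have hD : 0 < a * (1 - η) + S + 2 * (η * cs) := by nlinarith
    have hPRsm : PRsm B0 ds dm bs bm ts tm Ts Tm η =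
        2 * (η * cs) / (a * (1 - η) + S + 2 * (η * cs)) := by
      rw [PRsm, hSdef, hcs, hcm, ha]
      ring_nf
    rw [hPRsm, hg]
    have hden2 : 0 < 4 * η * cm * cs + 2 * cs * (S - a * (1 - η)) := by positivity
    have h1 : 1 - 2 * (η * cs) / (a * (1 - η) + S + 2 * (η * cs))
        = (a * (1 - η) + S) / (a * (1 - η) + S + 2 * (η * cs)) := by
      rw [eq_div_iff hD.ne', sub_mul, div_mul_cancel₀ _ hD.ne']; ring
    rw [h1, div_div, div_eq_div_iff (by positivity) hden2.ne']
    linear_combination 2 * cs * hS2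
  have hmem : Ioo (0:ℝ) 1 ∈ nhdsWithin (0:ℝ) (Ioi 0) :=
    Ioo_mem_nhdsGT_of_mem ⟨le_refl 0, zero_lt_one⟩
  have hcongr : (fun η : ℝ => (1 - PRsm B0 ds dm bs bm ts tm Ts Tm η) / η) =ᶠ[nhdsWithin 0 (Ioi 0)] g :=
    Filter.eventuallyEq_of_mem hmem key
  rw [Filter.tendsto_congr' hcongr]
  have hsq0 : Real.sqrt (a ^ 2 * (1 - 0) ^ 2 + 4 * 0 ^ 2 * cm * cs) = -a := by
    rw [show a ^ 2 * (1 - (0:ℝ)) ^ 2 + 4 * 0 ^ 2 * cm * cs = (-a) ^ 2 by ring]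
    exact Real.sqrt_sq (by linarith)
  have hne : Ts - Tm ≠ 0 := sub_ne_zero.mpr (ne_of_lt hTsm)
  have hne' : Tm - Ts ≠ 0 := sub_ne_zero.mpr (ne_of_gt hTsm)
  have hBst : B0 * ts * bs = Ts * ds := by rw [hTs]; field_simp
  have hBtm : B0 * tm * bm = Tm * dm := by rw [hTm]; field_simp
  have hna : (0:ℝ) < -a := by linarith
  have hg0 : g 0 = cm / (Tm - Ts) := by
    rw [hg]
    simp only
    rw [hsq0, show Tm - Ts = -a by rw [ha]; ring,
      show (4:ℝ) * 0 * cm * cs + 2 * cs * (-a - a * (1 - 0)) = 4 * cs * (-a) by ring,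
      div_eq_div_iff (by positivity) hna.ne']
    ring
  have hval : dm * (Tm - Ts) / (4 * B0 * ts * bs) * (((Ts + Tm) / (Ts - Tm)) ^ 2 - 1)
      = g 0 := by
    rw [hg0, hcm]
    rw [show 4 * B0 * ts * bs = 4 * (Ts * ds) by rw [← hBst]; ring, hBtm]
    field_simp
    ring
  rw [hval]
  apply tendsto_nhdsWithin_of_tendsto_nhds
  apply ContinuousAt.tendsto
  apply ContinuousAt.div continuousAt_const
  · fun_prop
  · rw [hsq0]
    have hna : (0:ℝ) < -a := by linarith
    have hpos : 0 < 4 * (0:ℝ) * cm * cs + 2 * cs * (-a - a * (1 - 0)) := by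
      nlinarith [mul_pos hcs0 hna]
    exact ne_of_gt hpos
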